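/- Let f : ℝ^d × ℝ^d → ℝ^d be anti-symmetric (f(x,y) = -f(y,x)) and satisfy, for constants L ≥ 0 and p₀ ≥ 2: (i) (|x|^{p₀-2} - |y|^{p₀-2})⟨x+y, f(x,y)⟩ ≤ L(|x|^{p₀} + |y|^{p₀}); and let g : ℝ^d × ℝ^d → ℝ^{d×l} satisfy (ii) ⟨x-y, f(x,y)⟩ + 2(p₀-1)|g(x,y)|² ≤ L(1 + |x-y|²), for all x, y ∈ ℝ^d. Let μ be a Borel probability measure on ℝ^d with ∫|x|^{p₀} dμ(x) < ∞. Then ∫∫ |x|^{p₀-2} ( ⟨x, f(x,y)⟩ + (p₀-1)|g(x,y)|² ) dμ(x) dμ(y) ≤ (2L + (p₀-2)/(2p₀) + L/2) ∫ |x|^{p₀} dμ(x) + L^{p₀/2}/p₀. -/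

import Mathlib

open RealInnerProductSpace MeasureTheory

private lemma young_aux {p₀ : ℝ} (hp₀ : 2 ≤ p₀) {a b : ℝ} (ha : 0 ≤ a) (hb : 0 ≤ b) :
    b * a ^ (p₀ - 2) ≤ (p₀ - 2) / p₀ * a ^ p₀ + 2 / p₀ * b ^ (p₀ / 2) := by
  rcases eq_or_lt_of_le hp₀ with h | h
  · subst h
    norm_num [Real.rpow_zero, Real.rpow_one]
  · have hp2 : (0:ℝ) < p₀ - 2 := by linarith
    have hp0 : (0:ℝ) < p₀ := by linarith
    have hpq : (p₀ / (p₀ - 2)).HolderConjugate (p₀ / 2) := by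
      constructor
      · rw [inv_div, inv_div, inv_one, ← add_div, sub_add_cancel, div_self hp0.ne']
      · positivity
      · positivity
    have hkey := Real.young_inequality_of_nonneg (Real.rpow_nonneg ha (p₀ - 2)) hb hpq
    have e1 : (a ^ (p₀ - 2)) ^ (p₀ / (p₀ - 2)) = a ^ p₀ := by
      rw [← Real.rpow_mul ha]
      congr 1
      field_simp
    rw [e1] at hkey
    have e2 : a ^ p₀ / (p₀ / (p₀ - 2)) = (p₀ - 2) / p₀ * a ^ p₀ := by
      field_simp
    have e3 : b ^ (p₀ / 2) / (p₀ / 2) = 2 / p₀ * b ^ (p₀ / 2) := by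
      field_simp
    rw [e2, e3] at hkey
    linarith [hkey]

set_option maxHeartbeats 1600000 in
private lemma pointwise_aux (d l : ℕ)
    (f : EuclideanSpace ℝ (Fin d) → EuclideanSpace ℝ (Fin d) → EuclideanSpace ℝ (Fin d))
    (g : EuclideanSpace ℝ (Fin d) → EuclideanSpace ℝ (Fin d) → EuclideanSpace ℝ (Fin d × Fin l))
    (L p₀ : ℝ) (hL : 0 ≤ L) (hp₀ : 2 ≤ p₀)
    (hanti : ∀ x y : EuclideanSpace ℝ (Fin d), f x y = - f y x)
    (h1 : ∀ x y : EuclideanSpace ℝ (Fin d),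
      (‖x‖ ^ (p₀ - 2) - ‖y‖ ^ (p₀ - 2)) * ⟪x + y, f x y⟫ ≤ L * (‖x‖ ^ p₀ + ‖y‖ ^ p₀))
    (h2 : ∀ x y : EuclideanSpace ℝ (Fin d),
      ⟪x - y, f x y⟫ + 2 * (p₀ - 1) * ‖g x y‖ ^ 2 ≤ L * (1 + ‖x - y‖ ^ 2))
    (x y : EuclideanSpace ℝ (Fin d)) :
    ‖x‖ ^ (p₀ - 2) * (⟪x, f x y⟫ + (p₀ - 1) * ‖g x y‖ ^ 2)
      + ‖y‖ ^ (p₀ - 2) * (⟪y, f y x⟫ + (p₀ - 1) * ‖g y x‖ ^ 2)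
    ≤ (2 * L + (p₀ - 2) / (2 * p₀) + L / 2) * ‖x‖ ^ p₀
      + (2 * L + (p₀ - 2) / (2 * p₀) + L / 2) * ‖y‖ ^ p₀
      + 2 * (L ^ (p₀ / 2) / p₀) := by
  have hp0 : (0:ℝ) < p₀ := by linarith
  have ha : (0:ℝ) ≤ ‖x‖ ^ (p₀ - 2) := Real.rpow_nonneg (norm_nonneg x) _
  have hb : (0:ℝ) ≤ ‖y‖ ^ (p₀ - 2) := Real.rpow_nonneg (norm_nonneg y) _
  -- symmetrization identity
  have hid : ‖x‖ ^ (p₀ - 2) * (⟪x, f x y⟫ + (p₀ - 1) * ‖g x y‖ ^ 2)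
      + ‖y‖ ^ (p₀ - 2) * (⟪y, f y x⟫ + (p₀ - 1) * ‖g y x‖ ^ 2)
      = (‖x‖ ^ (p₀ - 2) - ‖y‖ ^ (p₀ - 2)) * ⟪x + y, f x y⟫ / 2
        + (‖x‖ ^ (p₀ - 2) / 2) * (⟪x - y, f x y⟫ + 2 * (p₀ - 1) * ‖g x y‖ ^ 2)
        + (‖y‖ ^ (p₀ - 2) / 2) * (⟪x - y, f x y⟫ + 2 * (p₀ - 1) * ‖g y x‖ ^ 2) := by
    have e1 : ⟪x + y, f x y⟫ = ⟪x, f x y⟫ + ⟪y, f x y⟫ := inner_add_left _ _ _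
    have e2 : ⟪x - y, f x y⟫ = ⟪x, f x y⟫ - ⟪y, f x y⟫ := inner_sub_left _ _ _
    have e3 : ⟪y, f y x⟫ = -⟪y, f x y⟫ := by rw [hanti y x, inner_neg_right]
    rw [e1, e2, e3]; ring
  have t1 := h1 x y
  have t2 : (‖x‖ ^ (p₀ - 2) / 2) * (⟪x - y, f x y⟫ + 2 * (p₀ - 1) * ‖g x y‖ ^ 2)
      ≤ (‖x‖ ^ (p₀ - 2) / 2) * (L * (1 + ‖x - y‖ ^ 2)) :=
    mul_le_mul_of_nonneg_left (h2 x y) (by positivity)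
  have h2yx : ⟪x - y, f x y⟫ + 2 * (p₀ - 1) * ‖g y x‖ ^ 2 ≤ L * (1 + ‖x - y‖ ^ 2) := by
    have hh := h2 y x
    have e : ⟪y - x, f y x⟫ = ⟪x - y, f x y⟫ := by
      rw [hanti y x, inner_neg_right, inner_sub_left, inner_sub_left]; ring
    have e2 : ‖y - x‖ = ‖x - y‖ := norm_sub_rev y x
    rw [e, e2] at hh
    exact hh
  have t3 : (‖y‖ ^ (p₀ - 2) / 2) * (⟪x - y, f x y⟫ + 2 * (p₀ - 1) * ‖g y x‖ ^ 2)
      ≤ (‖y‖ ^ (p₀ - 2) / 2) * (L * (1 + ‖x - y‖ ^ 2)) :=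
    mul_le_mul_of_nonneg_left h2yx (by positivity)
  have hnsq : ‖x - y‖ ^ 2 ≤ 2 * ‖x‖ ^ 2 + 2 * ‖y‖ ^ 2 := by
    nlinarith [norm_sub_le x y, norm_nonneg (x - y), norm_nonneg x, norm_nonneg y,
      sq_nonneg (‖x‖ - ‖y‖)]
  have t4 : (L * (‖x‖ ^ (p₀ - 2) / 2) + L * (‖y‖ ^ (p₀ - 2) / 2)) * (‖x - y‖ ^ 2)
      ≤ (L * (‖x‖ ^ (p₀ - 2) / 2) + L * (‖y‖ ^ (p₀ - 2) / 2)) * (2 * ‖x‖ ^ 2 + 2 * ‖y‖ ^ 2) :=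
    mul_le_mul_of_nonneg_left hnsq (by positivity)
  -- power arithmetic
  have hax : ‖x‖ ^ (p₀ - 2) * ‖x‖ ^ 2 = ‖x‖ ^ p₀ := by
    rw [← Real.rpow_natCast ‖x‖ 2,
      ← Real.rpow_add_of_nonneg (norm_nonneg x) (by linarith) (by norm_num)]
    congr 1
    push_cast
    ring
  have hby : ‖y‖ ^ (p₀ - 2) * ‖y‖ ^ 2 = ‖y‖ ^ p₀ := by
    rw [← Real.rpow_natCast ‖y‖ 2,
      ← Real.rpow_add_of_nonneg (norm_nonneg y) (by linarith) (by norm_num)]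
    congr 1
    push_cast
    ring
  have haxL : L * (‖x‖ ^ (p₀ - 2) * ‖x‖ ^ 2) = L * ‖x‖ ^ p₀ := by rw [hax]
  have hbyL : L * (‖y‖ ^ (p₀ - 2) * ‖y‖ ^ 2) = L * ‖y‖ ^ p₀ := by rw [hby]
  -- Young inequalities
  have yLa : L * ‖x‖ ^ (p₀ - 2) ≤ (p₀ - 2) / p₀ * ‖x‖ ^ p₀ + 2 / p₀ * L ^ (p₀ / 2) :=
    young_aux hp₀ (norm_nonneg x) hL
  have yLb : L * ‖y‖ ^ (p₀ - 2) ≤ (p₀ - 2) / p₀ * ‖y‖ ^ p₀ + 2 / p₀ * L ^ (p₀ / 2) :=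
    young_aux hp₀ (norm_nonneg y) hL
  have hsq : ((‖y‖ : ℝ) ^ 2) ^ (p₀ / 2) = ‖y‖ ^ p₀ := by
    rw [← Real.rpow_natCast ‖y‖ 2, ← Real.rpow_mul (norm_nonneg y)]
    congr 1
    push_cast
    ring
  have hsq' : ((‖x‖ : ℝ) ^ 2) ^ (p₀ / 2) = ‖x‖ ^ p₀ := by
    rw [← Real.rpow_natCast ‖x‖ 2, ← Real.rpow_mul (norm_nonneg x)]
    congr 1
    push_cast
    ring
  have hc : 2 / p₀ = 1 - (p₀ - 2) / p₀ := by field_simp; ring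
  have yaY : ‖y‖ ^ 2 * ‖x‖ ^ (p₀ - 2)
      ≤ (p₀ - 2) / p₀ * ‖x‖ ^ p₀ + (1 - (p₀ - 2) / p₀) * ‖y‖ ^ p₀ := by
    have := young_aux hp₀ (norm_nonneg x) (by positivity : (0:ℝ) ≤ ‖y‖ ^ 2)
    rw [hsq, hc] at this
    exact this
  have ybX : ‖x‖ ^ 2 * ‖y‖ ^ (p₀ - 2)
      ≤ (p₀ - 2) / p₀ * ‖y‖ ^ p₀ + (1 - (p₀ - 2) / p₀) * ‖x‖ ^ p₀ := by
    have := young_aux hp₀ (norm_nonneg y) (by positivity : (0:ℝ) ≤ ‖x‖ ^ 2)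
    rw [hsq', hc] at this
    exact this
  have ycross : ‖y‖ ^ 2 * ‖x‖ ^ (p₀ - 2) + ‖x‖ ^ 2 * ‖y‖ ^ (p₀ - 2)
      ≤ ‖x‖ ^ p₀ + ‖y‖ ^ p₀ := by linarith
  have ycrossL : L * (‖y‖ ^ 2 * ‖x‖ ^ (p₀ - 2) + ‖x‖ ^ 2 * ‖y‖ ^ (p₀ - 2))
      ≤ L * (‖x‖ ^ p₀ + ‖y‖ ^ p₀) := mul_le_mul_of_nonneg_left ycross hL
  rw [hid]
  ring_nf at t1 t2 t3 t4 haxL hbyL yLa yLb ycrossL ⊢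
  linarith [t1, t2, t3, t4, haxL, hbyL, yLa, yLb, ycrossL]

theorem stmt17 (d l : ℕ)
    (f : EuclideanSpace ℝ (Fin d) → EuclideanSpace ℝ (Fin d) → EuclideanSpace ℝ (Fin d))
    (g : EuclideanSpace ℝ (Fin d) → EuclideanSpace ℝ (Fin d) → EuclideanSpace ℝ (Fin d × Fin l))
    (L p₀ : ℝ) (hL : 0 ≤ L) (hp₀ : 2 ≤ p₀)
    (hanti : ∀ x y : EuclideanSpace ℝ (Fin d), f x y = - f y x)
    (h1 : ∀ x y : EuclideanSpace ℝ (Fin d),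
      (‖x‖ ^ (p₀ - 2) - ‖y‖ ^ (p₀ - 2)) * ⟪x + y, f x y⟫ ≤ L * (‖x‖ ^ p₀ + ‖y‖ ^ p₀))
    (h2 : ∀ x y : EuclideanSpace ℝ (Fin d),
      ⟪x - y, f x y⟫ + 2 * (p₀ - 1) * ‖g x y‖ ^ 2 ≤ L * (1 + ‖x - y‖ ^ 2))
    (μ : Measure (EuclideanSpace ℝ (Fin d))) [IsProbabilityMeasure μ]
    (hmom : Integrable (fun x => ‖x‖ ^ p₀) μ)
    (hint : Integrable
      (fun pr : EuclideanSpace ℝ (Fin d) × EuclideanSpace ℝ (Fin d) =>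
        ‖pr.1‖ ^ (p₀ - 2) * (⟪pr.1, f pr.1 pr.2⟫ + (p₀ - 1) * ‖g pr.1 pr.2‖ ^ 2))
      (μ.prod μ)) :
    ∫ pr : EuclideanSpace ℝ (Fin d) × EuclideanSpace ℝ (Fin d),
        ‖pr.1‖ ^ (p₀ - 2) * (⟪pr.1, f pr.1 pr.2⟫ + (p₀ - 1) * ‖g pr.1 pr.2‖ ^ 2) ∂(μ.prod μ)
      ≤ (2 * L + (p₀ - 2) / (2 * p₀) + L / 2) * (∫ x, ‖x‖ ^ p₀ ∂μ) + L ^ (p₀ / 2) / p₀ := by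
  have hp0 : (0:ℝ) < p₀ := by linarith
  -- integrability of the swapped integrand
  have hswapF : Integrable
      (fun pr : EuclideanSpace ℝ (Fin d) × EuclideanSpace ℝ (Fin d) =>
        ‖pr.2‖ ^ (p₀ - 2) * (⟪pr.2, f pr.2 pr.1⟫ + (p₀ - 1) * ‖g pr.2 pr.1‖ ^ 2))
      (μ.prod μ) := hint.swap
  -- swapped integral equals original
  have hIsw := integral_prod_swap (μ := μ) (ν := μ)
    (fun pr : EuclideanSpace ℝ (Fin d) × EuclideanSpace ℝ (Fin d) =>
      ‖pr.1‖ ^ (p₀ - 2) * (⟪pr.1, f pr.1 pr.2⟫ + (p₀ - 1) * ‖g pr.1 pr.2‖ ^ 2))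
  simp only [Prod.fst_swap, Prod.snd_swap] at hIsw
  -- integrability of the bound
  have h1i : Integrable
      (fun z : EuclideanSpace ℝ (Fin d) × EuclideanSpace ℝ (Fin d) => ‖z.1‖ ^ p₀) (μ.prod μ) := by
    simpa using hmom.mul_prod (integrable_const (1 : ℝ))
  have h2i : Integrable
      (fun z : EuclideanSpace ℝ (Fin d) × EuclideanSpace ℝ (Fin d) => ‖z.2‖ ^ p₀) (μ.prod μ) := by
    simpa using (integrable_const (1 : ℝ)).mul_prod hmom
  set C : ℝ := 2 * L + (p₀ - 2) / (2 * p₀) + L / 2 with hC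
  set K : ℝ := 2 * (L ^ (p₀ / 2) / p₀) with hK
  clear_value C K
  have hCsum : Integrable
      (fun z : EuclideanSpace ℝ (Fin d) × EuclideanSpace ℝ (Fin d) =>
        C * ‖z.1‖ ^ p₀ + C * ‖z.2‖ ^ p₀) (μ.prod μ) := (h1i.const_mul C).add (h2i.const_mul C)
  have hHint : Integrable
      (fun z : EuclideanSpace ℝ (Fin d) × EuclideanSpace ℝ (Fin d) =>
        C * ‖z.1‖ ^ p₀ + C * ‖z.2‖ ^ p₀ + K) (μ.prod μ) := hCsum.add (integrable_const K)
  -- pointwise bound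
  have hpt : ∀ pr : EuclideanSpace ℝ (Fin d) × EuclideanSpace ℝ (Fin d),
      ‖pr.1‖ ^ (p₀ - 2) * (⟪pr.1, f pr.1 pr.2⟫ + (p₀ - 1) * ‖g pr.1 pr.2‖ ^ 2)
        + ‖pr.2‖ ^ (p₀ - 2) * (⟪pr.2, f pr.2 pr.1⟫ + (p₀ - 1) * ‖g pr.2 pr.1‖ ^ 2)
      ≤ C * ‖pr.1‖ ^ p₀ + C * ‖pr.2‖ ^ p₀ + K := by
    rintro ⟨x, y⟩
    rw [hC, hK]
    exact pointwise_aux d l f g L p₀ hL hp₀ hanti h1 h2 x y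
  have hmono : (∫ pr : EuclideanSpace ℝ (Fin d) × EuclideanSpace ℝ (Fin d),
      (‖pr.1‖ ^ (p₀ - 2) * (⟪pr.1, f pr.1 pr.2⟫ + (p₀ - 1) * ‖g pr.1 pr.2‖ ^ 2)
        + ‖pr.2‖ ^ (p₀ - 2) * (⟪pr.2, f pr.2 pr.1⟫ + (p₀ - 1) * ‖g pr.2 pr.1‖ ^ 2)) ∂(μ.prod μ))
      ≤ ∫ pr : EuclideanSpace ℝ (Fin d) × EuclideanSpace ℝ (Fin d),
        (C * ‖pr.1‖ ^ p₀ + C * ‖pr.2‖ ^ p₀ + K) ∂(μ.prod μ) :=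
    integral_mono (hint.add hswapF) hHint hpt
  have hadd : (∫ pr : EuclideanSpace ℝ (Fin d) × EuclideanSpace ℝ (Fin d),
      (‖pr.1‖ ^ (p₀ - 2) * (⟪pr.1, f pr.1 pr.2⟫ + (p₀ - 1) * ‖g pr.1 pr.2‖ ^ 2)
        + ‖pr.2‖ ^ (p₀ - 2) * (⟪pr.2, f pr.2 pr.1⟫ + (p₀ - 1) * ‖g pr.2 pr.1‖ ^ 2)) ∂(μ.prod μ))
      = (∫ pr : EuclideanSpace ℝ (Fin d) × EuclideanSpace ℝ (Fin d),
          ‖pr.1‖ ^ (p₀ - 2) * (⟪pr.1, f pr.1 pr.2⟫ + (p₀ - 1) * ‖g pr.1 pr.2‖ ^ 2) ∂(μ.prod μ))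
        + ∫ pr : EuclideanSpace ℝ (Fin d) × EuclideanSpace ℝ (Fin d),
          ‖pr.2‖ ^ (p₀ - 2) * (⟪pr.2, f pr.2 pr.1⟫ + (p₀ - 1) * ‖g pr.2 pr.1‖ ^ 2) ∂(μ.prod μ) :=
    integral_add hint hswapF
  have hsplit1 : (∫ pr : EuclideanSpace ℝ (Fin d) × EuclideanSpace ℝ (Fin d),
      (C * ‖pr.1‖ ^ p₀ + C * ‖pr.2‖ ^ p₀ + K) ∂(μ.prod μ))
      = (∫ pr : EuclideanSpace ℝ (Fin d) × EuclideanSpace ℝ (Fin d),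
          (C * ‖pr.1‖ ^ p₀ + C * ‖pr.2‖ ^ p₀) ∂(μ.prod μ))
        + ∫ _pr : EuclideanSpace ℝ (Fin d) × EuclideanSpace ℝ (Fin d), K ∂(μ.prod μ) :=
    integral_add hCsum (integrable_const K)
  have hsplit2 : (∫ pr : EuclideanSpace ℝ (Fin d) × EuclideanSpace ℝ (Fin d),
      (C * ‖pr.1‖ ^ p₀ + C * ‖pr.2‖ ^ p₀) ∂(μ.prod μ))
      = (∫ pr : EuclideanSpace ℝ (Fin d) × EuclideanSpace ℝ (Fin d),
          C * ‖pr.1‖ ^ p₀ ∂(μ.prod μ))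
        + ∫ pr : EuclideanSpace ℝ (Fin d) × EuclideanSpace ℝ (Fin d),
          C * ‖pr.2‖ ^ p₀ ∂(μ.prod μ) :=
    integral_add (h1i.const_mul C) (h2i.const_mul C)
  have hv1 : (∫ pr : EuclideanSpace ℝ (Fin d) × EuclideanSpace ℝ (Fin d),
      C * ‖pr.1‖ ^ p₀ ∂(μ.prod μ)) = C * ∫ x, ‖x‖ ^ p₀ ∂μ := by
    have h := integral_fun_fst (μ := μ) (ν := μ)
      (fun x : EuclideanSpace ℝ (Fin d) => ‖x‖ ^ p₀)
    simp only [probReal_univ, one_smul] at h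
    rw [integral_const_mul, h]
  have hv2 : (∫ pr : EuclideanSpace ℝ (Fin d) × EuclideanSpace ℝ (Fin d),
      C * ‖pr.2‖ ^ p₀ ∂(μ.prod μ)) = C * ∫ x, ‖x‖ ^ p₀ ∂μ := by
    have h := integral_fun_snd (μ := μ) (ν := μ)
      (fun x : EuclideanSpace ℝ (Fin d) => ‖x‖ ^ p₀)
    simp only [probReal_univ, one_smul] at h
    rw [integral_const_mul, h]
  have hvK : (∫ _pr : EuclideanSpace ℝ (Fin d) × EuclideanSpace ℝ (Fin d),
      K ∂(μ.prod μ)) = K := by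
    simp [measure_univ]
  have hKval : L ^ (p₀ / 2) / p₀ = K / 2 := by rw [hK]; ring
  rw [hKval]
  linarith [hmono, hadd, hsplit1, hsplit2, hv1, hv2, hvK, hIsw]
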